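/- There exists a 3-uniform unit vector of 8 qubits, i.e., a unit vector ψ ∈ (C^2)^{⊗8} all of whose reductions to any 3 of the 8 parties are maximally mixed; equivalently, there exists a pure quantum error-correcting code ((8, 1, 4))_2. -/
import Mathlib


/-!
Common definitions: multipartite systems with parties indexed by a finite type `ι`,
local dimensions `d : ι → ℕ`, vectors as functions on the configuration space,
partial traces, and `r`-uniform states and subspaces.
-/

open scoped ComplexConjugate Matrix

namespace RUnif

variable {ι : Type} [Fintype ι] [DecidableEq ι]

/-- Configuration space (computational basis index set) of the multipartite system
`ℂ^{d i₁} ⊗ ... ⊗ ℂ^{d iₙ}`. -/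
abbrev Cfg (d : ι → ℕ) : Type := ∀ i, Fin (d i)

/-- The multipartite Hilbert space `ℂ^{d i₁} ⊗ ... ⊗ ℂ^{d iₙ}`, realized as functions
on the configuration space. -/
abbrev H (d : ι → ℕ) : Type := Cfg d → ℂ

/-- The standard hermitian inner product `⟪φ, ψ⟫`. -/
noncomputable def dotc (d : ι → ℕ) (φ ψ : H d) : ℂ :=
  ∑ x, conj (φ x) * ψ x

/-- The rank-one operator `|ψ⟩⟨φ|` as a matrix. -/
noncomputable def dyad (d : ι → ℕ) (ψ φ : H d) : Matrix (Cfg d) (Cfg d) ℂ :=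
  Matrix.of fun x y => ψ x * conj (φ y)

/-- Configurations of the parties inside `S`. -/
abbrev SubCfg (d : ι → ℕ) (S : Finset ι) : Type := ∀ i : S, Fin (d i.1)

/-- Configurations of the parties outside `S`. -/
abbrev CoCfg (d : ι → ℕ) (S : Finset ι) : Type := ∀ i : {j : ι // j ∉ S}, Fin (d i.1)

/-- Merge a configuration of the parties in `S` with one of the parties outside `S`. -/
def merge (d : ι → ℕ) (S : Finset ι) (a : SubCfg d S) (c : CoCfg d S) : Cfg d :=
  fun i => if h : i ∈ S then a ⟨i, h⟩ else c ⟨i, h⟩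

/-- Partial trace over the parties *outside* `S` (i.e. `Tr_{Sᶜ}`), leaving an operator
on the parties in `S`. -/
noncomputable def ptr (d : ι → ℕ) (S : Finset ι) (M : Matrix (Cfg d) (Cfg d) ℂ) :
    Matrix (SubCfg d S) (SubCfg d S) ℂ :=
  Matrix.of fun a b => ∑ c : CoCfg d S, M (merge d S a c) (merge d S b c)

/-- The maximally mixed state `(1/d_S) I_S` on the parties in `S`. -/
noncomputable def unifMix (d : ι → ℕ) (S : Finset ι) :
    Matrix (SubCfg d S) (SubCfg d S) ℂ :=
  (∏ i : S, (d i.1 : ℂ))⁻¹ • 1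

/-- `ψ` is a unit vector. -/
def IsUnitVec (d : ι → ℕ) (ψ : H d) : Prop := dotc d ψ ψ = 1

/-- `ψ` is `r`-uniform: every reduction to `r` parties is maximally mixed. -/
def IsUniform (d : ι → ℕ) (r : ℕ) (ψ : H d) : Prop :=
  ∀ S : Finset ι, S.card = r → ptr d S (dyad d ψ ψ) = unifMix d S

/-- A subspace is `r`-uniform if every unit vector in it is an `r`-uniform state. -/
def IsUniformSubspace (d : ι → ℕ) (r : ℕ) (W : Submodule ℂ (H d)) : Prop :=
  ∀ ψ ∈ W, IsUnitVec d ψ → IsUniform d r ψ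

end RUnif

set_option maxRecDepth 100000

namespace Stmt15

open RUnif

/-- The extended Hamming code `[8,4,4]` (= RM(1,3)) as an explicit finset. -/
def hamC : Finset (∀ _ : Fin 8, Fin 2) :=
  {![0,0,0,0,0,0,0,0], ![0,0,0,0,1,1,1,1], ![0,0,1,1,0,0,1,1], ![0,0,1,1,1,1,0,0],
   ![0,1,0,1,0,1,0,1], ![0,1,0,1,1,0,1,0], ![0,1,1,0,0,1,1,0], ![0,1,1,0,1,0,0,1],
   ![1,1,1,1,1,1,1,1], ![1,1,1,1,0,0,0,0], ![1,1,0,0,1,1,0,0], ![1,1,0,0,0,0,1,1],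
   ![1,0,1,0,1,0,1,0], ![1,0,1,0,0,1,0,1], ![1,0,0,1,1,0,0,1], ![1,0,0,1,0,1,1,0]}

def f (x : ∀ _ : Fin 8, Fin 2) : ℤ := if x ∈ hamC then 1 else 0

theorem distFact : ∀ x ∈ hamC, ∀ y ∈ hamC, x ≠ y →
    4 ≤ (Finset.univ.filter fun j => x j ≠ y j).card := by decide

theorem unif3 : ∀ i j k : Fin 8, i ≠ j → i ≠ k → j ≠ k → ∀ u v w : Fin 2,
    (hamC.filter fun x => x i = u ∧ x j = v ∧ x k = w).card = 2 := by decide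

theorem normFact : (∑ x : (∀ _ : Fin 8, Fin 2), f x * f x) = 16 := by decide

lemma fsq (x : ∀ _ : Fin 8, Fin 2) : f x * f x = f x := by
  unfold f; split <;> norm_num

abbrev dd : Fin 8 → ℕ := fun _ => 2

lemma key (S : Finset (Fin 8)) (hS : S.card = 3) (a b : SubCfg dd S) :
    (∑ c : CoCfg dd S, f (merge dd S a c) * f (merge dd S b c))
      = if a = b then 2 else 0 := by
  by_cases hab : a = b
  · subst hab
    rw [if_pos rfl]
    simp only [fsq]
    have h1 : (∑ c : CoCfg dd S, f (merge dd S a c))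
        = ((Finset.univ.filter fun c : CoCfg dd S => merge dd S a c ∈ hamC).card : ℤ) := by
      unfold f; rw [Finset.sum_boole]
    rw [h1]
    have h2 : (Finset.univ.filter fun c : CoCfg dd S => merge dd S a c ∈ hamC).card
        = (hamC.filter fun x => ∀ i, (h : i ∈ S) → x i = a ⟨i, h⟩).card := by
      apply Finset.card_bij' (fun c _ => merge dd S a c) (fun x _ => fun i => x i.1)
      · intro c hc
        rw [Finset.mem_filter] at hc ⊢
        refine ⟨hc.2, fun i h => ?_⟩
        simp [merge, h]
      · intro x hx
        rw [Finset.mem_filter] at hx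
        rw [Finset.mem_filter]
        refine ⟨Finset.mem_univ _, ?_⟩
        have : merge dd S a (fun i => x i.1) = x := by
          funext i
          by_cases h : i ∈ S
          · simp [merge, h, hx.2 i h]
          · simp [merge, h]
        rw [this]; exact hx.1
      · intro c hc
        funext i
        simp [merge, i.2]
      · intro x hx
        rw [Finset.mem_filter] at hx
        funext i
        by_cases h : i ∈ S
        · simp [merge, h, hx.2 i h]
        · simp [merge, h]
    rw [h2]
    obtain ⟨i, j, k, hij, hik, hjk, hSeq⟩ := Finset.card_eq_three.mp hS
    subst hSeq
    have hi : i ∈ ({i, j, k} : Finset (Fin 8)) := by simp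
    have hj : j ∈ ({i, j, k} : Finset (Fin 8)) := by simp
    have hk : k ∈ ({i, j, k} : Finset (Fin 8)) := by simp
    have h3 : (hamC.filter fun x => ∀ i', (h : i' ∈ ({i, j, k} : Finset (Fin 8))) → x i' = a ⟨i', h⟩)
        = hamC.filter fun x => x i = a ⟨i, hi⟩ ∧ x j = a ⟨j, hj⟩ ∧ x k = a ⟨k, hk⟩ := by
      apply Finset.filter_congr
      intro x _
      constructor
      · intro h; exact ⟨h i hi, h j hj, h k hk⟩
      · rintro ⟨h1, h2, h3⟩ i' hi'
        rw [Finset.mem_insert, Finset.mem_insert, Finset.mem_singleton] at hi'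
        rcases hi' with rfl | rfl | rfl
        · exact h1
        · exact h2
        · exact h3
    rw [h3, unif3 i j k hij hik hjk]
    norm_num
  · rw [if_neg hab]
    apply Finset.sum_eq_zero
    intro c _
    have hne : merge dd S a c ≠ merge dd S b c := by
      obtain ⟨i0, hi0⟩ := Function.ne_iff.mp hab
      intro hEq
      apply hi0
      have h := congrFun hEq i0.1
      simpa [merge, i0.2] using h
    unfold f
    split
    · split
      · exfalso
        rename_i hm1 hm2
        have h4 := distFact _ hm1 _ hm2 hne
        have hsub : (Finset.univ.filter fun j => merge dd S a c j ≠ merge dd S b c j) ⊆ S := by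
          intro j hjmem
          rw [Finset.mem_filter] at hjmem
          by_contra hjS
          exact hjmem.2 (by simp [merge, hjS])
        have h5 := Finset.card_le_card hsub
        omega
      · ring
    · ring

end Stmt15

open RUnif in
/-- There exists a 3-uniform unit vector of 8 qubits, i.e. a pure
quantum error correcting code `((8, 1, 4))₂`. -/
theorem statement15 :
    ∃ ψ : H (fun _ : Fin 8 => 2),
      IsUnitVec (fun _ : Fin 8 => 2) ψ ∧ IsUniform (fun _ : Fin 8 => 2) 3 ψ := by
  classical
  refine ⟨fun x => (Stmt15.f x : ℂ) / 4, ?_, ?_⟩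
  · unfold IsUnitVec dotc
    have step : ∀ x : Cfg (fun _ : Fin 8 => 2),
        (starRingEnd ℂ) ((Stmt15.f x : ℂ)/4) * ((Stmt15.f x : ℂ)/4)
          = ((Stmt15.f x * Stmt15.f x : ℤ) : ℂ)/16 := by
      intro x; rw [map_div₀, map_intCast, map_ofNat]; push_cast; ring
    simp only [step]
    rw [← Finset.sum_div, ← Int.cast_sum, Stmt15.normFact]
    norm_num
  · intro S hS
    ext a b
    unfold ptr dyad unifMix
    simp only [Matrix.of_apply, Matrix.smul_apply, Matrix.one_apply, smul_eq_mul]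
    have step2 : ∀ c : CoCfg (fun _ : Fin 8 => 2) S,
        ((Stmt15.f (merge (fun _ : Fin 8 => 2) S a c) : ℂ)/4)
          * (starRingEnd ℂ) ((Stmt15.f (merge (fun _ : Fin 8 => 2) S b c) : ℂ)/4)
          = ((Stmt15.f (merge (fun _ : Fin 8 => 2) S a c)
              * Stmt15.f (merge (fun _ : Fin 8 => 2) S b c) : ℤ) : ℂ)/16 := by
      intro c; rw [map_div₀, map_intCast, map_ofNat]; push_cast; ring
    simp only [step2]
    rw [← Finset.sum_div, ← Int.cast_sum, Stmt15.key S hS a b]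
    simp only [Finset.prod_const, Finset.card_univ, Fintype.card_coe, hS]
    split_ifs with h <;> norm_num
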